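/- Let n ≥ 2 and define γ(E) = max_{y ∈ ℝⁿ} ∫_E (1/|x−y|) dx for measurable E ⊂ B_{R₀}. If E_k, E ⊂ B_{R₀} are measurable sets with χ_{E_k} → χ_E in L¹, then γ(E_k) → γ(E). -/

import Mathlib

open MeasureTheory Metric Set
open scoped ENNReal MeasureTheory RealInnerProductSpace

/-- Euclidean space ℝⁿ. -/
abbrev V (n : ℕ) := EuclideanSpace ℝ (Fin n)

/-- Divergence of a vector field on ℝⁿ. -/
noncomputable def vdiv {n : ℕ} (φ : V n → V n) (x : V n) : ℝ :=
  ∑ i, fderiv ℝ φ x (EuclideanSpace.single i 1) i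

/-- The admissible values in the variational definition of the relative perimeter
of `F` in the open set `U`. -/
def perSet {n : ℕ} (F U : Set (V n)) : Set ℝ :=
  {a | ∃ φ : V n → V n, ContDiff ℝ 1 φ ∧ HasCompactSupport φ ∧
    (∀ x, ‖φ x‖ ≤ 1) ∧ tsupport φ ⊆ U ∧ a = ∫ x in F, vdiv φ x}

/-- Relative perimeter of `F` in `U` (De Giorgi's variational definition). -/
noncomputable def perimeterIn {n : ℕ} (F U : Set (V n)) : ℝ := sSup (perSet F U)

/-- Perimeter of `F` in all of ℝⁿ. -/
noncomputable def perimeter {n : ℕ} (F : Set (V n)) : ℝ := perimeterIn F univ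

/-- `F` is a set of finite perimeter. -/
def HasFinitePerimeter {n : ℕ} (F : Set (V n)) : Prop :=
  MeasurableSet F ∧ BddAbove (perSet F univ)

/-- ω_n, the volume of the unit ball of ℝⁿ. -/
noncomputable def unitBallVol (n : ℕ) : ℝ := (volume (ball (0 : V n) 1)).toReal

/-- γ(E) = sup over y of ∫_E |x−y|⁻¹ dx. -/
noncomputable def gammaFn {n : ℕ} (E : Set (V n)) : ℝ :=
  sSup {b | ∃ y : V n, b = ∫ x in E, ‖x - y‖⁻¹}

lemma integrableOn_inv_norm_ball {n : ℕ} (hn : 2 ≤ n) (y : V n) (R : ℝ) :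
    IntegrableOn (fun x : V n => ‖x - y‖⁻¹) (ball y R) := by
  have hmeas : Measurable fun x : V n => ‖x - y‖⁻¹ :=
    (measurable_id.sub_const y).norm.inv
  have hnn : ∀ x : V n, 0 ≤ ‖x - y‖⁻¹ := fun x => by positivity
  refine ⟨hmeas.aestronglyMeasurable, ?_⟩
  rw [hasFiniteIntegral_iff_ofReal (Filter.Eventually.of_forall hnn)]
  rw [lintegral_eq_lintegral_meas_le _ (Filter.Eventually.of_forall hnn) hmeas.aemeasurable]
  have hsub : ∀ t : ℝ, 0 < t →
      {x : V n | t ≤ ‖x - y‖⁻¹} ⊆ closedBall y t⁻¹ := by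
    intro t ht x hx
    simp only [mem_setOf_eq] at hx
    rw [mem_closedBall, dist_eq_norm]
    rcases eq_or_ne x y with rfl | hxy
    · simp only [sub_self, norm_zero]; positivity
    · have h0 : 0 < ‖x - y‖ := by rwa [norm_pos_iff, sub_ne_zero]
      calc ‖x - y‖ = (‖x - y‖⁻¹)⁻¹ := by rw [inv_inv]
        _ ≤ t⁻¹ := by gcongr
  have hB : volume (ball y R) < ⊤ := measure_ball_lt_top
  calc ∫⁻ t in Ioi (0:ℝ), (volume.restrict (ball y R)) {a | t ≤ ‖a - y‖⁻¹}
      ≤ ∫⁻ t in Ioc (0:ℝ) 1 ∪ Ioi 1, (volume.restrict (ball y R)) {a | t ≤ ‖a - y‖⁻¹} :=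
        lintegral_mono_set Ioi_subset_Ioc_union_Ioi
    _ ≤ (∫⁻ t in Ioc (0:ℝ) 1, (volume.restrict (ball y R)) {a | t ≤ ‖a - y‖⁻¹})
        + ∫⁻ t in Ioi (1:ℝ), (volume.restrict (ball y R)) {a | t ≤ ‖a - y‖⁻¹} :=
        lintegral_union_le _ _ _
    _ < ⊤ := by
        refine ENNReal.add_lt_top.2 ⟨?_, ?_⟩
        · calc ∫⁻ t in Ioc (0:ℝ) 1, (volume.restrict (ball y R)) {a | t ≤ ‖a - y‖⁻¹}
              ≤ ∫⁻ _ in Ioc (0:ℝ) 1, volume (ball y R) :=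
                lintegral_mono fun t =>
                  (measure_mono (subset_univ _)).trans_eq (Measure.restrict_apply_univ _)
            _ < ⊤ := by
                rw [setLIntegral_const]
                exact ENNReal.mul_lt_top hB (by simp [Real.volume_Ioc])
        · have hb : ∀ t ∈ Ioi (1:ℝ), (volume.restrict (ball y R)) {a | t ≤ ‖a - y‖⁻¹}
              ≤ ENNReal.ofReal (t ^ (-2 : ℝ)) * volume (ball (0 : V n) 1) := by
            intro t ht
            have ht1 : (1:ℝ) < t := ht
            have ht0 : (0:ℝ) < t := one_pos.trans ht1
            calc (volume.restrict (ball y R)) {a | t ≤ ‖a - y‖⁻¹}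
                ≤ volume (closedBall y t⁻¹) :=
                  (Measure.restrict_apply_le _ _).trans (measure_mono (hsub t ht0))
              _ = ENNReal.ofReal (t⁻¹ ^ Module.finrank ℝ (V n)) * volume (ball (0 : V n) 1) := by
                  rw [Measure.addHaar_closedBall _ _ (by positivity)]
              _ ≤ ENNReal.ofReal (t ^ (-2 : ℝ)) * volume (ball (0 : V n) 1) := by
                  gcongr
                  rw [finrank_euclideanSpace_fin]
                  have h1 : t⁻¹ ≤ 1 := by
                    rw [inv_le_one_iff₀]; right; exact ht1.le
                  have h2 : t⁻¹ ^ n ≤ t⁻¹ ^ 2 :=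
                    pow_le_pow_of_le_one (by positivity) h1 hn
                  calc t⁻¹ ^ n ≤ t⁻¹ ^ 2 := h2
                    _ = t ^ (-2 : ℝ) := by
                      rw [inv_pow, ← Real.rpow_natCast t 2, ← Real.rpow_neg ht0.le]
                      norm_num
          calc ∫⁻ t in Ioi (1:ℝ), (volume.restrict (ball y R)) {a | t ≤ ‖a - y‖⁻¹}
              ≤ ∫⁻ t in Ioi (1:ℝ), ENNReal.ofReal (t ^ (-2:ℝ)) * volume (ball (0 : V n) 1) :=
                setLIntegral_mono' measurableSet_Ioi hb
            _ = (∫⁻ t in Ioi (1:ℝ), ENNReal.ofReal (t ^ (-2:ℝ))) * volume (ball (0 : V n) 1) := by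
                rw [lintegral_mul_const' _ _ measure_ball_lt_top.ne]
            _ < ⊤ := ENNReal.mul_lt_top
                (integrableOn_Ioi_rpow_of_lt (by norm_num) one_pos).setLIntegral_lt_top
                measure_ball_lt_top

lemma ball_zero_subset {n : ℕ} (y : V n) (R : ℝ) :
    ball (0 : V n) R ⊆ ball y (R + ‖y‖) := fun x hx => by
  rw [mem_ball, dist_eq_norm]
  have hx' : ‖x‖ < R := by rwa [mem_ball_zero_iff] at hx
  calc ‖x - y‖ ≤ ‖x‖ + ‖y‖ := norm_sub_le x y
    _ < R + ‖y‖ := by linarith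

lemma integrableOn_inv_norm_of_subset {n : ℕ} (hn : 2 ≤ n) (y : V n) {s : Set (V n)} {R : ℝ}
    (hs : s ⊆ ball 0 R) :
    IntegrableOn (fun x : V n => ‖x - y‖⁻¹) s :=
  (integrableOn_inv_norm_ball hn y (R + ‖y‖)).mono_set (hs.trans (ball_zero_subset y R))

lemma integral_ball_translate {n : ℕ} (y : V n) (r : ℝ) :
    ∫ x in ball y r, ‖x - y‖⁻¹ = ∫ x in ball (0 : V n) r, ‖x‖⁻¹ := by
  have mp := measurePreserving_add_right (volume : Measure (V n)) y
  have h := mp.setIntegral_preimage_emb (MeasurableEquiv.addRight y).measurableEmbedding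
      (fun x => ‖x - y‖⁻¹) (ball y r)
  have hpre : (fun x : V n => x + y) ⁻¹' ball y r = ball 0 r := by
    ext x
    simp [mem_ball, dist_eq_norm]
  rw [← h, hpre]
  simp [add_sub_cancel_right]

lemma small_ball_integral {n : ℕ} (hn : 2 ≤ n) {ε : ℝ} (hε : 0 < ε) :
    ∃ r : ℝ, 0 < r ∧ ∫ x in ball (0 : V n) r, ‖x‖⁻¹ < ε := by
  have hint : IntegrableOn (fun x : V n => ‖x‖⁻¹) (ball 0 1) := by
    have := integrableOn_inv_norm_ball hn (0 : V n) 1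
    simpa using this
  set bound : V n → ℝ := (ball (0 : V n) 1).indicator (fun x => ‖x‖⁻¹) with hbound
  have hboundint : Integrable bound :=
    (integrable_indicator_iff measurableSet_ball).2 hint
  set F : ℕ → V n → ℝ :=
    fun k => (ball (0 : V n) ((k : ℝ) + 1)⁻¹).indicator (fun x => ‖x‖⁻¹) with hF
  have hrk : ∀ k : ℕ, (0:ℝ) < ((k : ℝ) + 1)⁻¹ := fun k => by positivity
  have hrk1 : ∀ k : ℕ, ((k : ℝ) + 1)⁻¹ ≤ 1 := fun k => by
    rw [inv_le_one_iff₀]; right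
    have : (0:ℝ) ≤ (k:ℝ) := Nat.cast_nonneg k
    linarith
  have htendsto : Filter.Tendsto (fun k => ∫ x, F k x) Filter.atTop (nhds (∫ _ : V n, (0:ℝ))) := by
    refine tendsto_integral_of_dominated_convergence bound ?_ hboundint ?_ ?_
    · intro k
      exact (((measurable_norm).inv).aestronglyMeasurable).indicator measurableSet_ball
    · intro k
      refine Filter.Eventually.of_forall fun x => ?_
      by_cases hx : x ∈ ball (0 : V n) ((k : ℝ) + 1)⁻¹
      · have hx1 : x ∈ ball (0 : V n) 1 := ball_subset_ball (hrk1 k) hx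
        rw [hF]
        simp only [indicator_of_mem hx, hbound, indicator_of_mem hx1]
        rw [Real.norm_of_nonneg (by positivity)]
      · rw [hF]
        simp only [indicator_of_notMem hx, norm_zero, hbound]
        exact indicator_nonneg (fun x _ => by positivity) x
    · have hz : volume ({(0 : V n)} : Set (V n)) = 0 := by
        have h1 : volume ({(0 : V n)} : Set (V n)) ≤ volume (closedBall (0 : V n) 0) :=
          measure_mono (by simp)
        rw [Measure.addHaar_closedBall _ _ le_rfl, finrank_euclideanSpace_fin,
          zero_pow (by omega : n ≠ 0)] at h1
        simpa using h1
      have h0 : ∀ᵐ x : V n, x ≠ 0 := by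
        refine (ae_iff).2 ?_
        simpa using hz
      filter_upwards [h0] with x hx
      have hnorm : 0 < ‖x‖ := norm_pos_iff.2 hx
      have : ∀ᶠ k in Filter.atTop, F k x = 0 := by
        have ht : Filter.Tendsto (fun k : ℕ => ((k : ℝ) + 1)⁻¹) Filter.atTop (nhds 0) := by
          exact tendsto_one_div_add_atTop_nhds_zero_nat.congr (fun k => by rw [one_div])
        filter_upwards [ht.eventually (gt_mem_nhds hnorm)] with k hk
        rw [hF]
        refine indicator_of_notMem ?_ _
        rw [mem_ball_zero_iff]
        exact not_lt.2 hk.le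
      exact Filter.Tendsto.congr' (this.mono fun k hk => hk.symm) tendsto_const_nhds
  rw [integral_zero] at htendsto
  have := htendsto.eventually (gt_mem_nhds hε)
  obtain ⟨K, hK⟩ := this.exists
  refine ⟨((K : ℝ) + 1)⁻¹, hrk K, ?_⟩
  rw [← integral_indicator measurableSet_ball]
  exact hK

lemma small_set_integral {n : ℕ} (hn : 2 ≤ n) (R₀ : ℝ) {ε : ℝ} (hε : 0 < ε) :
    ∃ δ : ℝ, 0 < δ ∧ ∀ S : Set (V n), MeasurableSet S → S ⊆ ball 0 R₀ →
      volume S < ENNReal.ofReal δ → ∀ y : V n, ∫ x in S, ‖x - y‖⁻¹ ≤ ε := by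
  obtain ⟨r, hr, hrε⟩ := small_ball_integral hn (half_pos hε) (n := n)
  refine ⟨r * (ε / 2), by positivity, ?_⟩
  intro S hS hS' hSvol y
  have hSfin : volume S < ⊤ := hSvol.trans_le le_top
  have hint : IntegrableOn (fun x : V n => ‖x - y‖⁻¹) S :=
    integrableOn_inv_norm_of_subset hn y hS'
  have hsplit : S = (S ∩ ball y r) ∪ (S \ ball y r) := (inter_union_diff S _).symm
  have hdisj : Disjoint (S ∩ ball y r) (S \ ball y r) :=
    (disjoint_sdiff_self_right).mono_left inter_subset_right
  have hi1 : IntegrableOn (fun x : V n => ‖x - y‖⁻¹) (S ∩ ball y r) :=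
    hint.mono_set inter_subset_left
  have hi2 : IntegrableOn (fun x : V n => ‖x - y‖⁻¹) (S \ ball y r) :=
    hint.mono_set diff_subset
  have heq : ∫ x in S, ‖x - y‖⁻¹
      = (∫ x in S ∩ ball y r, ‖x - y‖⁻¹) + ∫ x in S \ ball y r, ‖x - y‖⁻¹ := by
    conv_lhs => rw [hsplit]
    exact setIntegral_union hdisj (hS.diff measurableSet_ball) hi1 hi2
  have h1 : ∫ x in S ∩ ball y r, ‖x - y‖⁻¹ ≤ ε / 2 := by
    have hmono : ∫ x in S ∩ ball y r, ‖x - y‖⁻¹ ≤ ∫ x in ball y r, ‖x - y‖⁻¹ := by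
      refine setIntegral_mono_set (integrableOn_inv_norm_ball hn y r)
        (Filter.Eventually.of_forall fun x => by positivity)
        (Filter.Eventually.of_forall fun x hx => hx.2)
    rw [integral_ball_translate] at hmono
    exact hmono.trans hrε.le
  have h2 : ∫ x in S \ ball y r, ‖x - y‖⁻¹ ≤ ε / 2 := by
    have hle : ∀ x ∈ S \ ball y r, ‖x - y‖⁻¹ ≤ r⁻¹ := by
      intro x hx
      have : r ≤ ‖x - y‖ := by
        have := hx.2
        rw [mem_ball, dist_eq_norm] at this
        linarith [not_lt.1 this]
      exact inv_anti₀ hr this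
    have : ∫ x in S \ ball y r, ‖x - y‖⁻¹ ≤ ∫ _ in S \ ball y r, r⁻¹ := by
      refine setIntegral_mono_on hi2 (integrableOn_const ?_)
        (hS.diff measurableSet_ball) hle
      exact ((measure_mono diff_subset).trans_lt hSfin).ne
    rw [setIntegral_const] at this
    refine this.trans ?_
    have hvol : (volume (S \ ball y r)).toReal ≤ r * (ε / 2) := by
      have h := (measure_mono (diff_subset (t := ball y r))).trans_lt hSvol
      have := ENNReal.toReal_lt_of_lt_ofReal h
      linarith
    calc (volume (S \ ball y r)).toReal • r⁻¹ ≤ (r * (ε / 2)) * r⁻¹ := by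
          rw [smul_eq_mul]
          exact mul_le_mul_of_nonneg_right hvol (by positivity)
      _ = ε / 2 := by field_simp
  linarith [heq, h1, h2]

lemma integral_le_bound {n : ℕ} (hn : 2 ≤ n) (R₀ : ℝ) {A : Set (V n)}
    (hA : MeasurableSet A) (hA' : A ⊆ ball (0 : V n) R₀) (y : V n) :
    ∫ x in A, ‖x - y‖⁻¹
      ≤ (∫ x in ball (0 : V n) 1, ‖x‖⁻¹) + (volume (ball (0 : V n) R₀)).toReal := by
  have hint : IntegrableOn (fun x : V n => ‖x - y‖⁻¹) A :=
    integrableOn_inv_norm_of_subset hn y hA'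
  have hsplit : A = (A ∩ ball y 1) ∪ (A \ ball y 1) := (inter_union_diff A _).symm
  have hdisj : Disjoint (A ∩ ball y 1) (A \ ball y 1) :=
    (disjoint_sdiff_self_right).mono_left inter_subset_right
  have hi1 : IntegrableOn (fun x : V n => ‖x - y‖⁻¹) (A ∩ ball y 1) :=
    hint.mono_set inter_subset_left
  have hi2 : IntegrableOn (fun x : V n => ‖x - y‖⁻¹) (A \ ball y 1) :=
    hint.mono_set diff_subset
  have heq : ∫ x in A, ‖x - y‖⁻¹
      = (∫ x in A ∩ ball y 1, ‖x - y‖⁻¹) + ∫ x in A \ ball y 1, ‖x - y‖⁻¹ := by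
    conv_lhs => rw [hsplit]
    exact setIntegral_union hdisj (hA.diff measurableSet_ball) hi1 hi2
  have h1 : ∫ x in A ∩ ball y 1, ‖x - y‖⁻¹ ≤ ∫ x in ball (0 : V n) 1, ‖x‖⁻¹ := by
    have hmono : ∫ x in A ∩ ball y 1, ‖x - y‖⁻¹ ≤ ∫ x in ball y 1, ‖x - y‖⁻¹ :=
      setIntegral_mono_set (integrableOn_inv_norm_ball hn y 1)
        (Filter.Eventually.of_forall fun x => by positivity)
        (Filter.Eventually.of_forall fun x hx => hx.2)
    rwa [integral_ball_translate] at hmono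
  have h2 : ∫ x in A \ ball y 1, ‖x - y‖⁻¹ ≤ (volume (ball (0 : V n) R₀)).toReal := by
    have hfin : volume (A \ ball y 1) < ⊤ :=
      ((measure_mono (diff_subset.trans hA')).trans_lt measure_ball_lt_top)
    have hle : ∀ x ∈ A \ ball y 1, ‖x - y‖⁻¹ ≤ 1 := by
      intro x hx
      have h1x : (1:ℝ) ≤ ‖x - y‖ := by
        have := hx.2
        rw [mem_ball, dist_eq_norm] at this
        linarith [not_lt.1 this]
      calc ‖x - y‖⁻¹ ≤ 1⁻¹ := by
            apply inv_anti₀ one_pos h1x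
        _ = 1 := inv_one
    have hstep : ∫ x in A \ ball y 1, ‖x - y‖⁻¹ ≤ ∫ _ in A \ ball y 1, (1:ℝ) :=
      setIntegral_mono_on hi2 (integrableOn_const hfin.ne)
        (hA.diff measurableSet_ball) hle
    rw [setIntegral_const, smul_eq_mul, mul_one] at hstep
    refine hstep.trans ?_
    exact ENNReal.toReal_mono measure_ball_lt_top.ne
      (measure_mono (diff_subset.trans hA'))
  linarith

lemma gammaSet_nonempty {n : ℕ} (A : Set (V n)) :
    {b | ∃ y : V n, b = ∫ x in A, ‖x - y‖⁻¹}.Nonempty :=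
  ⟨_, ⟨0, rfl⟩⟩

lemma gammaSet_bddAbove {n : ℕ} (hn : 2 ≤ n) (R₀ : ℝ) {A : Set (V n)}
    (hA : MeasurableSet A) (hA' : A ⊆ ball (0 : V n) R₀) :
    BddAbove {b | ∃ y : V n, b = ∫ x in A, ‖x - y‖⁻¹} := by
  refine ⟨(∫ x in ball (0 : V n) 1, ‖x‖⁻¹) + (volume (ball (0 : V n) R₀)).toReal, ?_⟩
  rintro b ⟨y, rfl⟩
  exact integral_le_bound hn R₀ hA hA' y

lemma gammaFn_le {n : ℕ} (hn : 2 ≤ n) (R₀ : ℝ) {A B : Set (V n)}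
    (hA : MeasurableSet A) (hA' : A ⊆ ball (0 : V n) R₀)
    (hB : MeasurableSet B) (hB' : B ⊆ ball (0 : V n) R₀)
    {c : ℝ} (hc : ∀ y : V n, ∫ x in A \ B, ‖x - y‖⁻¹ ≤ c) :
    gammaFn A ≤ gammaFn B + c := by
  refine csSup_le (gammaSet_nonempty A) ?_
  rintro b ⟨y, rfl⟩
  have hUsub : B ∪ (A \ B) ⊆ ball (0 : V n) R₀ :=
    union_subset hB' (diff_subset.trans hA')
  have hiU : IntegrableOn (fun x : V n => ‖x - y‖⁻¹) (B ∪ (A \ B)) :=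
    integrableOn_inv_norm_of_subset hn y hUsub
  have hsub : A ⊆ B ∪ (A \ B) := fun x hx => by
    by_cases hxB : x ∈ B
    · exact Or.inl hxB
    · exact Or.inr ⟨hx, hxB⟩
  have hmono : ∫ x in A, ‖x - y‖⁻¹ ≤ ∫ x in B ∪ (A \ B), ‖x - y‖⁻¹ :=
    setIntegral_mono_set hiU
      (Filter.Eventually.of_forall fun x => by positivity)
      (HasSubset.Subset.eventuallyLE hsub)
  rw [setIntegral_union disjoint_sdiff_self_right (hA.diff hB)
    (hiU.mono_set subset_union_left) (hiU.mono_set subset_union_right)] at hmono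
  have hBle : ∫ x in B, ‖x - y‖⁻¹ ≤ gammaFn B :=
    le_csSup (gammaSet_bddAbove hn R₀ hB hB') ⟨y, rfl⟩
  have := hc y
  linarith

theorem stmt6 (n : ℕ) (hn : 2 ≤ n) (R₀ : ℝ) (hR : 0 < R₀)
    (Ek : ℕ → Set (V n)) (E : Set (V n))
    (hEk : ∀ k, MeasurableSet (Ek k) ∧ Ek k ⊆ ball 0 R₀)
    (hE : MeasurableSet E) (hE' : E ⊆ ball 0 R₀)
    (hconv : Filter.Tendsto (fun k => volume (symmDiff (Ek k) E)) Filter.atTop (nhds 0)) :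
    Filter.Tendsto (fun k => gammaFn (Ek k)) Filter.atTop (nhds (gammaFn E)) := by
  rw [Metric.tendsto_atTop]
  intro ε hε
  obtain ⟨δ, hδ, hsmall⟩ := small_set_integral (n := n) hn R₀ (half_pos hε)
  have hevent : ∀ᶠ k in Filter.atTop, volume (symmDiff (Ek k) E) < ENNReal.ofReal δ :=
    hconv.eventually (gt_mem_nhds (ENNReal.ofReal_pos.2 hδ))
  obtain ⟨N, hN⟩ := Filter.eventually_atTop.1 hevent
  refine ⟨N, fun k hk => ?_⟩
  obtain ⟨hAm, hA'⟩ := hEk k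
  have hd1 : volume (Ek k \ E) < ENNReal.ofReal δ :=
    lt_of_le_of_lt (measure_mono (by rw [Set.symmDiff_def]; exact subset_union_left)) (hN k hk)
  have hd2 : volume (E \ Ek k) < ENNReal.ofReal δ :=
    lt_of_le_of_lt (measure_mono (by rw [Set.symmDiff_def]; exact subset_union_right)) (hN k hk)
  have h1 : gammaFn (Ek k) ≤ gammaFn E + ε / 2 :=
    gammaFn_le hn R₀ hAm hA' hE hE'
      (fun y => hsmall (Ek k \ E) (hAm.diff hE) (diff_subset.trans hA') hd1 y)
  have h2 : gammaFn E ≤ gammaFn (Ek k) + ε / 2 :=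
    gammaFn_le hn R₀ hE hE' hAm hA'
      (fun y => hsmall (E \ Ek k) (hE.diff hAm) (diff_subset.trans hE') hd2 y)
  rw [Real.dist_eq, abs_sub_lt_iff]
  constructor <;> linarith
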